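/- Let ρ : [0,∞) → ℝ be nearly Lipschitz with constants A, B, let λ > 0, and define M(x) = (6/x³)∫₀ˣ (2t − x)ρ(t) dt for x > 0. Then there exists a constant C such that for all x, y with 1 ≤ x ≤ y ≤ x + λ, |M(x) − M(y)| ≤ C/x. -/

import Mathlib

open intervalIntegral MeasureTheory

-- algebra for the cubic term
lemma aux3 (R B lam x y Fx Fy : ℝ) (hR : 0 ≤ R) (hB : 0 ≤ B) (hlam : 0 < lam)
    (hx : 1 ≤ x) (hxy : x ≤ y) (hyl : y ≤ x + lam)
    (hFx : |Fx| ≤ x ^ 2 * (R + B * x)) (hFd : |Fy - Fx| ≤ lam * (y * (R + B * y))) :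
    |Fx / x ^ 3 - Fy / y ^ 3| ≤ 4 * lam * (R + B) / x := by
  have hx0 : (0:ℝ) < x := lt_of_lt_of_le one_pos hx
  have hy0 : (0:ℝ) < y := lt_of_lt_of_le hx0 hxy
  have hy1 : (1:ℝ) ≤ y := hx.trans hxy
  rw [div_sub_div _ _ (by positivity : (x:ℝ) ^ 3 ≠ 0) (by positivity : (y:ℝ) ^ 3 ≠ 0),
    abs_div, abs_of_pos (by positivity : (0:ℝ) < x ^ 3 * y ^ 3),
    div_le_div_iff₀ (by positivity) hx0]
  have hx3 : x ^ 3 ≤ y ^ 3 := pow_le_pow_left₀ hx0.le hxy 3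
  have hyy : y ≤ y ^ 2 := by nlinarith [mul_nonneg hy0.le (sub_nonneg.2 hy1)]
  have hsum : y ^ 2 + x * y + x ^ 2 ≤ 3 * y ^ 2 := by
    nlinarith [mul_le_mul_of_nonneg_right hxy hy0.le, mul_le_mul hxy hxy hx0.le hy0.le]
  have hcube : y ^ 3 - x ^ 3 ≤ 3 * lam * y ^ 2 := by
    nlinarith [mul_le_mul_of_nonneg_right (show y - x ≤ lam by linarith)
      (show (0:ℝ) ≤ y ^ 2 + x * y + x ^ 2 by positivity),
      mul_le_mul_of_nonneg_left hsum hlam.le]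
  have habs : |Fx * y ^ 3 - Fy * x ^ 3| ≤ |Fy - Fx| * x ^ 3 + |Fx| * (y ^ 3 - x ^ 3) := by
    have e : Fx * y ^ 3 - Fy * x ^ 3 = (Fx - Fy) * x ^ 3 + Fx * (y ^ 3 - x ^ 3) := by ring
    rw [e]
    refine (abs_add_le _ _).trans ?_
    rw [abs_mul, abs_mul, abs_of_pos (by positivity : (0:ℝ) < x ^ 3),
      abs_of_nonneg (by linarith : (0:ℝ) ≤ y ^ 3 - x ^ 3), abs_sub_comm]
  have k1 : x ≤ y ^ 2 := by linarith
  have k2 : x * y ≤ y ^ 2 := by nlinarith [mul_le_mul_of_nonneg_right hxy hy0.le]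
  have i1 : x * (R + B * y) ≤ (R + B) * y ^ 2 := by
    nlinarith [mul_le_mul_of_nonneg_left k1 hR, mul_le_mul_of_nonneg_left k2 hB]
  have i2 : R + B * x ≤ (R + B) * y := by
    nlinarith [mul_nonneg hR (sub_nonneg.2 hy1), mul_le_mul_of_nonneg_left hxy hB]
  have hB1 : |Fy - Fx| * x ^ 3 ≤ lam * (y * (R + B * y)) * x ^ 3 := by
    have := mul_le_mul_of_nonneg_right hFd (by positivity : (0:ℝ) ≤ x ^ 3); linarith
  have hpos3 : (0:ℝ) ≤ R + B * x := by positivity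
  have hB2 : |Fx| * (y ^ 3 - x ^ 3) ≤ x ^ 2 * (R + B * x) * (3 * lam * y ^ 2) := by
    have h1 : |Fx| * (y ^ 3 - x ^ 3) ≤ (x ^ 2 * (R + B * x)) * (y ^ 3 - x ^ 3) := by
      apply mul_le_mul_of_nonneg_right hFx (by linarith)
    have h2 : (x ^ 2 * (R + B * x)) * (y ^ 3 - x ^ 3) ≤ (x ^ 2 * (R + B * x)) * (3 * lam * y ^ 2) := by
      apply mul_le_mul_of_nonneg_left hcube
        (by nlinarith [hpos3] : (0:ℝ) ≤ x ^ 2 * (R + B * x))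
    linarith
  have j1 : lam * (x ^ 3 * y) * (x * (R + B * y)) ≤ lam * (x ^ 3 * y) * ((R + B) * y ^ 2) :=
    mul_le_mul_of_nonneg_left i1 (by positivity)
  have j2 : (3 * lam * (x ^ 3 * y ^ 2)) * (R + B * x) ≤ (3 * lam * (x ^ 3 * y ^ 2)) * ((R + B) * y) :=
    mul_le_mul_of_nonneg_left i2 (by positivity)
  have hstep : |Fx * y ^ 3 - Fy * x ^ 3| * x ≤
      (lam * (y * (R + B * y)) * x ^ 3 + x ^ 2 * (R + B * x) * (3 * lam * y ^ 2)) * x := by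
    apply mul_le_mul_of_nonneg_right _ (le_of_lt hx0)
    linarith
  rw [show Fx * y ^ 3 - x ^ 3 * Fy = Fx * y ^ 3 - Fy * x ^ 3 from by ring]
  nlinarith [hstep, j1, j2]

-- algebra for the quadratic term
lemma aux2 (R B lam x y Gx Gy : ℝ) (hR : 0 ≤ R) (hB : 0 ≤ B) (hlam : 0 < lam)
    (hx : 1 ≤ x) (hxy : x ≤ y) (hyl : y ≤ x + lam)
    (hGx : |Gx| ≤ x * (R + B * x)) (hGd : |Gy - Gx| ≤ lam * (R + B * y)) :
    |Gx / x ^ 2 - Gy / y ^ 2| ≤ 3 * lam * (R + B) / x := by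
  have hx0 : (0:ℝ) < x := lt_of_lt_of_le one_pos hx
  have hy0 : (0:ℝ) < y := lt_of_lt_of_le hx0 hxy
  have hy1 : (1:ℝ) ≤ y := hx.trans hxy
  rw [div_sub_div _ _ (by positivity : (x:ℝ) ^ 2 ≠ 0) (by positivity : (y:ℝ) ^ 2 ≠ 0),
    abs_div, abs_of_pos (by positivity : (0:ℝ) < x ^ 2 * y ^ 2),
    div_le_div_iff₀ (by positivity) hx0]
  have hx2 : x ^ 2 ≤ y ^ 2 := pow_le_pow_left₀ hx0.le hxy 2
  have hyy : y ≤ y ^ 2 := by nlinarith [mul_nonneg hy0.le (sub_nonneg.2 hy1)]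
  have hsq : y ^ 2 - x ^ 2 ≤ 2 * lam * y := by
    nlinarith [mul_le_mul_of_nonneg_right (show y - x ≤ lam by linarith)
      (show (0:ℝ) ≤ y + x by positivity),
      mul_le_mul_of_nonneg_left (show y + x ≤ 2 * y by linarith) hlam.le]
  have habs : |Gx * y ^ 2 - Gy * x ^ 2| ≤ |Gy - Gx| * x ^ 2 + |Gx| * (y ^ 2 - x ^ 2) := by
    have e : Gx * y ^ 2 - Gy * x ^ 2 = (Gx - Gy) * x ^ 2 + Gx * (y ^ 2 - x ^ 2) := by ring
    rw [e]
    refine (abs_add_le _ _).trans ?_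
    rw [abs_mul, abs_mul, abs_of_pos (by positivity : (0:ℝ) < x ^ 2),
      abs_of_nonneg (by linarith : (0:ℝ) ≤ y ^ 2 - x ^ 2), abs_sub_comm]
  have k1 : x ≤ y ^ 2 := by linarith
  have k2 : x * y ≤ y ^ 2 := by nlinarith [mul_le_mul_of_nonneg_right hxy hy0.le]
  have i1 : x * (R + B * y) ≤ (R + B) * y ^ 2 := by
    nlinarith [mul_le_mul_of_nonneg_left k1 hR, mul_le_mul_of_nonneg_left k2 hB]
  have i2 : R + B * x ≤ (R + B) * y := by
    nlinarith [mul_nonneg hR (sub_nonneg.2 hy1), mul_le_mul_of_nonneg_left hxy hB]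
  have hB1 : |Gy - Gx| * x ^ 2 ≤ lam * (R + B * y) * x ^ 2 :=
    mul_le_mul_of_nonneg_right hGd (by positivity)
  have hB2 : |Gx| * (y ^ 2 - x ^ 2) ≤ x * (R + B * x) * (2 * lam * y) := by
    have hpos2 : (0:ℝ) ≤ R + B * x := by positivity
    have h1 : |Gx| * (y ^ 2 - x ^ 2) ≤ (x * (R + B * x)) * (y ^ 2 - x ^ 2) :=
      mul_le_mul_of_nonneg_right hGx (by linarith)
    have h2 : (x * (R + B * x)) * (y ^ 2 - x ^ 2) ≤ (x * (R + B * x)) * (2 * lam * y) :=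
      mul_le_mul_of_nonneg_left hsq (by positivity)
    linarith
  have j1 : (lam * x ^ 2) * (x * (R + B * y)) ≤ (lam * x ^ 2) * ((R + B) * y ^ 2) :=
    mul_le_mul_of_nonneg_left i1 (by positivity)
  have j2 : (2 * lam * (x ^ 2 * y)) * (R + B * x) ≤ (2 * lam * (x ^ 2 * y)) * ((R + B) * y) :=
    mul_le_mul_of_nonneg_left i2 (by positivity)
  have hstep : |Gx * y ^ 2 - Gy * x ^ 2| * x ≤
      (lam * (R + B * y) * x ^ 2 + x * (R + B * x) * (2 * lam * y)) * x := by
    apply mul_le_mul_of_nonneg_right _ (le_of_lt hx0)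
    linarith
  rw [show Gx * y ^ 2 - x ^ 2 * Gy = Gx * y ^ 2 - Gy * x ^ 2 from by ring]
  nlinarith [hstep, j1, j2]

theorem stmt8 (ρ : ℝ → ℝ) (hmeas : Measurable ρ) (A B : ℝ)
    (h : ∀ x y : ℝ, 0 ≤ x → 0 ≤ y → |ρ x - ρ y| ≤ A + B * |x - y|)
    (lam : ℝ) (hlam : 0 < lam)
    (M : ℝ → ℝ)
    (hM : ∀ x : ℝ, 0 < x → M x = 6 / x ^ 3 * ∫ t in (0:ℝ)..x, (2 * t - x) * ρ t) :
    ∃ C : ℝ, ∀ x y : ℝ, 1 ≤ x → x ≤ y → y ≤ x + lam → |M x - M y| ≤ C / x := by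
  have hA : 0 ≤ A := by
    have := h 0 0 le_rfl le_rfl
    simp at this
    linarith
  have hpos : ∀ t : ℝ, 0 ≤ t → 0 ≤ A + B * t := by
    intro t ht
    have := h t 0 ht le_rfl
    have h0 : (0:ℝ) ≤ |ρ t - ρ 0| := abs_nonneg _
    rw [sub_zero, abs_of_nonneg ht] at this
    linarith
  have hB : 0 ≤ B := by
    by_contra hBneg
    push_neg at hBneg
    have hne : -B ≠ 0 := by linarith
    have ht : (0:ℝ) ≤ (A + 1) / (-B) := div_nonneg (by linarith) (by linarith)
    have h1 := hpos _ ht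
    have h2 : B * ((A + 1) / (-B)) = -(A + 1) := by
      field_simp
      rw [div_self (ne_of_lt hBneg)]
    linarith
  set R : ℝ := |ρ 0| + A with hRdef
  have hR : 0 ≤ R := by positivity
  -- pointwise bound on ρ
  have hρb : ∀ t : ℝ, 0 ≤ t → |ρ t| ≤ R + B * t := by
    intro t ht
    have h1 := h t 0 ht le_rfl
    calc |ρ t| = |(ρ t - ρ 0) + ρ 0| := by ring_nf
      _ ≤ |ρ t - ρ 0| + |ρ 0| := abs_add_le _ _
      _ ≤ (A + B * |t - 0|) + |ρ 0| := by linarith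
      _ = R + B * t := by rw [sub_zero, abs_of_nonneg ht]; ring
  -- interval integrability of ρ
  have intρ : ∀ a b : ℝ, 0 ≤ a → a ≤ b → IntervalIntegrable ρ volume a b := by
    intro a b ha hab
    rw [intervalIntegrable_iff_integrableOn_Ioc_of_le hab]
    apply Integrable.mono' (integrableOn_const (C := R + B * b) measure_Ioc_lt_top.ne)
      hmeas.aestronglyMeasurable
    filter_upwards [ae_restrict_mem measurableSet_Ioc] with t ht
    have h1 := hρb t (ha.trans (le_of_lt ht.1))
    have : B * t ≤ B * b := mul_le_mul_of_nonneg_left ht.2 hB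
    calc ‖ρ t‖ = |ρ t| := rfl
      _ ≤ R + B * t := h1
      _ ≤ R + B * b := by linarith
  have intF : ∀ a b : ℝ, 0 ≤ a → a ≤ b → IntervalIntegrable (fun t => t * ρ t) volume a b :=
    fun a b ha hab => (intρ a b ha hab).continuousOn_mul continuous_id.continuousOn
  -- integral bounds
  have Gbound : ∀ a b : ℝ, 0 ≤ a → a ≤ b → |∫ t in a..b, ρ t| ≤ (R + B * b) * (b - a) := by
    intro a b ha hab
    have := intervalIntegral.norm_integral_le_of_norm_le_const
      (C := R + B * b) (f := ρ) (a := a) (b := b) ?_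
    · rwa [Real.norm_eq_abs, abs_of_nonneg (sub_nonneg.2 hab)] at this
    · intro t ht
      rw [Set.uIoc_of_le hab] at ht
      have h1 := hρb t (ha.trans (le_of_lt ht.1))
      have : B * t ≤ B * b := mul_le_mul_of_nonneg_left ht.2 hB
      calc ‖ρ t‖ = |ρ t| := rfl
        _ ≤ R + B * t := h1
        _ ≤ R + B * b := by linarith
  have Fbound : ∀ a b : ℝ, 0 ≤ a → a ≤ b →
      |∫ t in a..b, t * ρ t| ≤ b * (R + B * b) * (b - a) := by
    intro a b ha hab
    have := intervalIntegral.norm_integral_le_of_norm_le_const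
      (C := b * (R + B * b)) (f := fun t => t * ρ t) (a := a) (b := b) ?_
    · rwa [Real.norm_eq_abs, abs_of_nonneg (sub_nonneg.2 hab)] at this
    · intro t ht
      rw [Set.uIoc_of_le hab] at ht
      have ht0 : 0 ≤ t := ha.trans (le_of_lt ht.1)
      have h1 := hρb t ht0
      have h2 : B * t ≤ B * b := mul_le_mul_of_nonneg_left ht.2 hB
      have h3 : (0:ℝ) ≤ R + B * b := by
        have := hpos b (ha.trans hab)
        have := abs_nonneg (ρ 0)
        rw [hRdef]; linarith
      calc ‖t * ρ t‖ = |t| * |ρ t| := by rw [norm_mul]; rfl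
        _ ≤ b * (R + B * b) := by
            apply mul_le_mul (by rw [abs_of_nonneg ht0]; exact ht.2)
              (by linarith) (abs_nonneg _) (ha.trans hab)
  -- M in terms of F and G
  have hMsplit : ∀ x : ℝ, 1 ≤ x →
      M x = 12 * (∫ t in (0:ℝ)..x, t * ρ t) / x ^ 3 - 6 * (∫ t in (0:ℝ)..x, ρ t) / x ^ 2 := by
    intro x hx
    have hx0 : (0:ℝ) < x := lt_of_lt_of_le one_pos hx
    rw [hM x hx0]
    have e : (∫ t in (0:ℝ)..x, (2 * t - x) * ρ t)
        = 2 * (∫ t in (0:ℝ)..x, t * ρ t) - x * (∫ t in (0:ℝ)..x, ρ t) := by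
      rw [← intervalIntegral.integral_const_mul, ← intervalIntegral.integral_const_mul,
        ← intervalIntegral.integral_sub ((intF 0 x le_rfl hx0.le).const_mul 2)
          ((intρ 0 x le_rfl hx0.le).const_mul x)]
      apply intervalIntegral.integral_congr
      intro t _
      ring
    rw [e]
    field_simp
    ring
  refine ⟨66 * lam * (R + B), ?_⟩
  intro x y hx hxy hyl
  have hx0 : (0:ℝ) < x := lt_of_lt_of_le one_pos hx
  have hy0 : (0:ℝ) < y := lt_of_lt_of_le hx0 hxy
  have hy1 : (1:ℝ) ≤ y := hx.trans hxy
  set Fx := ∫ t in (0:ℝ)..x, t * ρ t with hFxdef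
  set Fy := ∫ t in (0:ℝ)..y, t * ρ t with hFydef
  set Gx := ∫ t in (0:ℝ)..x, ρ t with hGxdef
  set Gy := ∫ t in (0:ℝ)..y, ρ t with hGydef
  have hFx : |Fx| ≤ x ^ 2 * (R + B * x) := by
    have := Fbound 0 x le_rfl hx0.le
    calc |Fx| ≤ x * (R + B * x) * (x - 0) := this
      _ = x ^ 2 * (R + B * x) := by ring
  have hGx : |Gx| ≤ x * (R + B * x) := by
    have := Gbound 0 x le_rfl hx0.le
    calc |Gx| ≤ (R + B * x) * (x - 0) := this
      _ = x * (R + B * x) := by ring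
  have hRBy : (0:ℝ) ≤ R + B * y := by
    have := hpos y hy0.le
    have := abs_nonneg (ρ 0)
    rw [hRdef]; linarith
  have hFadd : Fx + (∫ t in x..y, t * ρ t) = Fy :=
    intervalIntegral.integral_add_adjacent_intervals (intF 0 x le_rfl hx0.le)
      (intF x y hx0.le hxy)
  have hGadd : Gx + (∫ t in x..y, ρ t) = Gy :=
    intervalIntegral.integral_add_adjacent_intervals (intρ 0 x le_rfl hx0.le)
      (intρ x y hx0.le hxy)
  have hFd : |Fy - Fx| ≤ lam * (y * (R + B * y)) := by
    have e : Fy - Fx = ∫ t in x..y, t * ρ t := by linarith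
    rw [e]
    calc |∫ t in x..y, t * ρ t| ≤ y * (R + B * y) * (y - x) := Fbound x y hx0.le hxy
      _ ≤ y * (R + B * y) * lam := by
          apply mul_le_mul_of_nonneg_left (by linarith) (by positivity)
      _ = lam * (y * (R + B * y)) := by ring
  have hGd : |Gy - Gx| ≤ lam * (R + B * y) := by
    have e : Gy - Gx = ∫ t in x..y, ρ t := by linarith
    rw [e]
    calc |∫ t in x..y, ρ t| ≤ (R + B * y) * (y - x) := Gbound x y hx0.le hxy
      _ ≤ (R + B * y) * lam := by
          apply mul_le_mul_of_nonneg_left (by linarith) hRBy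
      _ = lam * (R + B * y) := by ring
  have hD1 := aux3 R B lam x y Fx Fy hR hB hlam hx hxy hyl hFx hFd
  have hD2 := aux2 R B lam x y Gx Gy hR hB hlam hx hxy hyl hGx hGd
  rw [hMsplit x hx, hMsplit y hy1]
  have e : 12 * Fx / x ^ 3 - 6 * Gx / x ^ 2 - (12 * Fy / y ^ 3 - 6 * Gy / y ^ 2)
      = 12 * (Fx / x ^ 3 - Fy / y ^ 3) - 6 * (Gx / x ^ 2 - Gy / y ^ 2) := by ring
  rw [e]
  calc |12 * (Fx / x ^ 3 - Fy / y ^ 3) - 6 * (Gx / x ^ 2 - Gy / y ^ 2)|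
      ≤ |12 * (Fx / x ^ 3 - Fy / y ^ 3)| + |6 * (Gx / x ^ 2 - Gy / y ^ 2)| := abs_sub _ _
    _ = 12 * |Fx / x ^ 3 - Fy / y ^ 3| + 6 * |Gx / x ^ 2 - Gy / y ^ 2| := by
        rw [abs_mul, abs_mul]; norm_num
    _ ≤ 12 * (4 * lam * (R + B) / x) + 6 * (3 * lam * (R + B) / x) := by
        apply add_le_add
        · exact mul_le_mul_of_nonneg_left hD1 (by norm_num)
        · exact mul_le_mul_of_nonneg_left hD2 (by norm_num)
    _ = 66 * lam * (R + B) / x := by field_simp; ring
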